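/- arXiv:2408.09654 — 2 statements merged into one kernel-verified Lean document; each statement's English description precedes it below -/
import Mathlib

section
/- For a nonempty loopless matroid M on ground set E with an element 0 ∈ E, the reduced characteristic polynomial satisfies χ̄_M(t) = Σ_{F flat, 0 ∉ F} χ_{M^F}(t) · (−t)^{rk(M_F) − 1} · β(M_F), where the sum ranges over all flats F of M not containing 0 (including the empty flat), M^F is the restriction (localization) to F, M_F is the contraction by F, and β is the beta invariant. -/
open scoped Matroid

variable {α : Type*}

/-- The rank of a set in a matroid: the maximum size of an independent subset of the set. -/
noncomputable def Matroid.rkSet (M : Matroid α) (S : Set α) : ℕ :=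
  ⨆ I : {I : Set α // M.Indep I ∧ I ⊆ S}, I.1.ncard

/-- The rank of a matroid: the rank of its ground set. -/
noncomputable def Matroid.rank (M : Matroid α) : ℕ := M.rkSet M.E

/-- Deletion of a set from a matroid. -/
noncomputable def Matroid.del (M : Matroid α) (D : Set α) : Matroid α := M ↾ (M.E \ D)

/-- Contraction of a matroid by a set, defined via duality: `M / C = (M✶ \ C)✶`. -/
noncomputable def Matroid.con (M : Matroid α) (C : Set α) : Matroid α := (M✶.del C)✶

/-- A matroid is loopless if every singleton of the ground set is independent. -/
def Matroid.IsLoopless (M : Matroid α) : Prop := ∀ e ∈ M.E, M.Indep {e}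

/-- A matroid is simple if every (at most two-element) subset `{e, f}` of the ground set is
independent. -/
def Matroid.IsSimple (M : Matroid α) : Prop := ∀ e ∈ M.E, ∀ f ∈ M.E, M.Indep {e, f}

/-- The characteristic polynomial of a matroid, as a function of `t`, given by the
Whitney rank-generating-function formula `χ_M(t) = ∑_{S ⊆ E} (-1)^|S| t^(rk M - rk S)`
(which agrees with the Möbius-function definition for loopless matroids). -/
noncomputable def Matroid.charPoly (M : Matroid α) (t : ℚ) : ℚ :=
  ∑ᶠ (S : Set α) (_ : S ⊆ M.E), (-1 : ℚ) ^ S.ncard * t ^ (M.rank - M.rkSet S)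

/-- The beta invariant of a matroid, via Crapo's formula
`β(M) = (-1)^(rk M) ∑_{S ⊆ E} (-1)^|S| rk S`. -/
noncomputable def Matroid.betaInv (M : Matroid α) : ℚ :=
  (-1 : ℚ) ^ M.rank * ∑ᶠ (S : Set α) (_ : S ⊆ M.E), (-1 : ℚ) ^ S.ncard * (M.rkSet S : ℚ)

/-- The invariant `c_M = -2^(rk M) · χ_M(1/2)`. -/
noncomputable def Matroid.cInv (M : Matroid α) : ℚ :=
  - 2 ^ M.rank * M.charPoly (1/2)

namespace Aux
open Set
open scoped Classical

variable {M : Matroid α} {I J X Y : Set α}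

lemma rkSet_le {n : ℕ} (h : ∀ J, M.Indep J → J ⊆ X → J.ncard ≤ n) : M.rkSet X ≤ n :=
  ciSup_le' fun ⟨J, hJ⟩ => h J hJ.1 hJ.2

lemma le_rkSet (hfin : M.E.Finite) (hJ : M.Indep J) (hJX : J ⊆ X) : J.ncard ≤ M.rkSet X := by
  refine le_ciSup_of_le ⟨M.E.ncard, ?_⟩ (⟨J, hJ, hJX⟩ : {I : Set α // M.Indep I ∧ I ⊆ X}) le_rfl
  rintro n ⟨⟨K, hK⟩, rfl⟩
  exact Set.ncard_le_ncard hK.1.subset_ground hfin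

lemma rkSet_eq_of_basis' (hfin : M.E.Finite) (hI : M.IsBasis' I X) : M.rkSet X = I.ncard := by
  refine le_antisymm (rkSet_le fun J hJ hJX => ?_) (le_rkSet hfin hI.indep hI.subset)
  obtain ⟨J', hJ', hJJ'⟩ := hJ.subset_isBasis'_of_subset hJX
  calc J.ncard ≤ J'.ncard := Set.ncard_le_ncard hJJ' (hfin.subset hJ'.indep.subset_ground)
    _ = I.ncard := by rw [Set.ncard_def, hJ'.encard_eq_encard hI, ← Set.ncard_def]

lemma rkSet_indep (hfin : M.E.Finite) (hI : M.Indep I) : M.rkSet I = I.ncard :=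
  rkSet_eq_of_basis' hfin hI.isBasis_self.isBasis'

lemma rkSet_empty (hfin : M.E.Finite) : M.rkSet ∅ = 0 := by
  simp [rkSet_indep hfin M.empty_indep]

lemma rkSet_mono (hfin : M.E.Finite) (hXY : X ⊆ Y) : M.rkSet X ≤ M.rkSet Y := by
  obtain ⟨I, hI⟩ := M.exists_isBasis' X
  rw [rkSet_eq_of_basis' hfin hI]
  exact le_rkSet hfin hI.indep (hI.subset.trans hXY)

lemma rkSet_le_rank (hfin : M.E.Finite) (hX : X ⊆ M.E) : M.rkSet X ≤ M.rank :=
  rkSet_mono hfin hX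

lemma rkSet_closure (hfin : M.E.Finite) (hX : X ⊆ M.E) :
    M.rkSet (M.closure X) = M.rkSet X := by
  obtain ⟨I, hI⟩ := M.exists_isBasis X hX
  rw [rkSet_eq_of_basis' hfin hI.isBasis'.isBasis_closure_right.isBasis',
    rkSet_eq_of_basis' hfin hI.isBasis']

lemma rank_eq_of_base (hfin : M.E.Finite) {B : Set α} (hB : M.IsBase B) : M.rank = B.ncard :=
  rkSet_eq_of_basis' hfin hB.isBasis_ground.isBasis'

lemma rkSet_congr {N : Matroid α} (h : ∀ I, I ⊆ X → (M.Indep I ↔ N.Indep I)) :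
    M.rkSet X = N.rkSet X := by
  unfold Matroid.rkSet
  rw [iSup, iSup]
  congr 1
  ext n
  constructor
  · rintro ⟨⟨I, hI⟩, rfl⟩; exact ⟨⟨I, (h I hI.2).1 hI.1, hI.2⟩, rfl⟩
  · rintro ⟨⟨I, hI⟩, rfl⟩; exact ⟨⟨I, (h I hI.2).2 hI.1, hI.2⟩, rfl⟩

lemma restrict_rkSet {R : Set α} (hXR : X ⊆ R) : (M ↾ R).rkSet X = M.rkSet X :=
  rkSet_congr fun I hI => by
    rw [Matroid.restrict_indep_iff]; exact ⟨fun h => h.1, fun h => ⟨h, hI.trans hXR⟩⟩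

lemma restrict_rank {R : Set α} : (M ↾ R).rank = (M ↾ R).rkSet R := rfl

lemma rkSet_insert_of_not_mem_closure {e : α} (hfin : M.E.Finite) (hX : X ⊆ M.E)
    (he : e ∈ M.E) (hecl : e ∉ M.closure X) :
    M.rkSet (insert e X) = M.rkSet X + 1 := by
  obtain ⟨I, hI⟩ := M.exists_isBasis X hX
  have hcl : M.closure I = M.closure X := hI.closure_eq_closure
  have heI : e ∉ I := fun h => hecl (hcl ▸ M.mem_closure_of_mem h hI.indep.subset_ground)
  have hins : M.Indep (insert e I) := by
    rw [hI.indep.insert_indep_iff_of_notMem heI, hcl]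
    exact ⟨he, hecl⟩
  have hbas : M.IsBasis (insert e I) (insert e X) := hI.insert_isBasis_insert hins
  rw [rkSet_eq_of_basis' hfin hbas.isBasis', rkSet_eq_of_basis' hfin hI.isBasis',
    Set.ncard_insert_of_notMem heI (hfin.subset hI.indep.subset_ground)]

lemma flat_eq_ground_of_rank_le {F : Set α} (hfin : M.E.Finite) (hF : M.IsFlat F)
    (hr : M.rank ≤ M.rkSet F) : F = M.E := by
  obtain ⟨I, hI⟩ := M.exists_isBasis F hF.subset_ground
  obtain ⟨B, hB, hIB⟩ := hI.indep.exists_isBase_superset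
  have hIfin : B.Finite := hfin.subset hB.subset_ground
  have hIB' : I = B := by
    refine Set.eq_of_subset_of_ncard_le hIB ?_ hIfin
    rw [← rank_eq_of_base hfin hB, ← rkSet_eq_of_basis' hfin hI.isBasis']
    exact hr
  have : M.closure I = M.E := hIB' ▸ hB.closure_eq
  refine subset_antisymm hF.subset_ground ?_
  rw [← this]
  exact (M.closure_subset_closure hI.subset).trans (hF.closure.le)

lemma rkSet_lt_rank_of_flat_ne {F : Set α} (hfin : M.E.Finite) (hF : M.IsFlat F)
    (hne : F ≠ M.E) : M.rkSet F < M.rank := by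
  rcases lt_or_ge (M.rkSet F) M.rank with h | h
  · exact h
  · exact absurd (flat_eq_ground_of_rank_le hfin hF h) hne


/-- The dual rank formula. -/
lemma dual_rkSet_add (hfin : M.E.Finite) (hX : X ⊆ M.E) :
    M✶.rkSet X + M.rank = X.ncard + M.rkSet (M.E \ X) := by
  obtain ⟨J, hJ⟩ := M.exists_isBasis (M.E \ X) diff_subset
  obtain ⟨B, hB, hJB⟩ := hJ.indep.exists_isBase_superset
  have hBE : B ⊆ M.E := hB.subset_ground
  have hBfin : B.Finite := hfin.subset hBE
  have hXfin : X.Finite := hfin.subset hX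
  have hJBX : J ⊆ B \ X := subset_diff.2 ⟨hJB, disjoint_sdiff_left.mono_left hJ.subset⟩
  have hcard1 : (B \ X).ncard = M.rkSet (M.E \ X) := by
    refine le_antisymm ?_ ?_
    · exact le_rkSet hfin (hB.indep.subset diff_subset) (diff_subset_diff_left hBE)
    · rw [rkSet_eq_of_basis' hfin hJ.isBasis']
      exact Set.ncard_le_ncard hJBX (hBfin.subset diff_subset)
  have hrB : M.rank = B.ncard := rank_eq_of_base hfin hB
  have n2 : (X ∩ B).ncard + (X \ B).ncard = X.ncard :=
    Set.ncard_inter_add_ncard_diff_eq_ncard X B hXfin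
  have n4 : (B ∩ X).ncard + (B \ X).ncard = B.ncard :=
    Set.ncard_inter_add_ncard_diff_eq_ncard B X hBfin
  have hcomm : (X ∩ B).ncard = (B ∩ X).ncard := by rw [inter_comm]
  have hkey : M✶.rkSet X = (X \ B).ncard := by
    refine le_antisymm (rkSet_le fun K hK hKX => ?_) ?_
    · obtain ⟨B', hB', hdisj⟩ := (Matroid.dual_indep_iff_exists'.1 hK).2
      have hB'E : B' ⊆ M.E := hB'.subset_ground
      have h1 : K.ncard ≤ (X \ B').ncard :=
        Set.ncard_le_ncard (subset_diff.2 ⟨hKX, hdisj⟩) (hXfin.subset diff_subset)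
      have n1 : (X ∩ B').ncard + (X \ B').ncard = X.ncard :=
        Set.ncard_inter_add_ncard_diff_eq_ncard X B' hXfin
      have n3 : (B' ∩ X).ncard + (B' \ X).ncard = B'.ncard :=
        Set.ncard_inter_add_ncard_diff_eq_ncard B' X (hfin.subset hB'E)
      have n5 : (B' \ X).ncard ≤ M.rkSet (M.E \ X) :=
        le_rkSet hfin (hB'.indep.subset diff_subset) (diff_subset_diff_left hB'E)
      have hrB' : M.rank = B'.ncard := rank_eq_of_base hfin hB'
      have hcomm' : (X ∩ B').ncard = (B' ∩ X).ncard := by rw [inter_comm]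
      omega
    · exact le_rkSet (M := M✶) hfin
        (Matroid.dual_indep_iff_exists'.2
          ⟨diff_subset.trans hX, B, hB, disjoint_sdiff_left⟩) diff_subset
  omega

lemma dual_rank_add (hfin : M.E.Finite) : M✶.rank + M.rank = M.E.ncard := by
  have h := dual_rkSet_add (M := M) hfin (X := M.E) subset_rfl
  have h0 : M.rkSet (M.E \ M.E) = 0 := by
    simp only [diff_self]
    have := rkSet_indep (M := M) hfin M.empty_indep
    simpa using this
  have h1 : M✶.rank = M✶.rkSet M.E := rfl
  have h2 : M.rank = M.rkSet M.E := rfl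
  omega

lemma con_ground {C : Set α} : (M.con C).E = M.E \ C := rfl

lemma con_rkSet_add (hfin : M.E.Finite) {C S : Set α} (hC : C ⊆ M.E) (hS : S ⊆ M.E \ C) :
    (M.con C).rkSet S + M.rkSet C = M.rkSet (S ∪ C) := by
  set N : Matroid α := M✶ ↾ (M.E \ C) with hN
  have hNE : N.E = M.E \ C := rfl
  have hNfin : N.E.Finite := hfin.diff (t := C)
  have hconN : M.con C = N✶ := rfl
  have hYdef : (M.E \ C) \ S ⊆ M.E := diff_subset.trans diff_subset
  -- dual formula for N
  have h1 : N✶.rkSet S + N.rank = S.ncard + N.rkSet (N.E \ S) :=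
    dual_rkSet_add hNfin (by rw [hNE]; exact hS)
  -- N.rkSet of subsets of E \ C equals M✶.rkSet
  have hNrk : ∀ Y : Set α, Y ⊆ M.E \ C → N.rkSet Y = M✶.rkSet Y := fun Y hY =>
    restrict_rkSet hY
  -- dual formula for M at Y := (E \ C) \ S
  have h2 : M✶.rkSet ((M.E \ C) \ S) + M.rank
      = ((M.E \ C) \ S).ncard + M.rkSet (M.E \ ((M.E \ C) \ S)) :=
    dual_rkSet_add hfin hYdef
  have h3 : M✶.rkSet (M.E \ C) + M.rank = (M.E \ C).ncard + M.rkSet C := by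
    have := dual_rkSet_add (M := M) hfin (X := M.E \ C) diff_subset
    rwa [diff_diff_cancel_left hC] at this
  -- N.rank
  have h4 : N.rank = M✶.rkSet (M.E \ C) := by
    unfold Matroid.rank; rw [hNE]; exact hNrk _ subset_rfl
  -- set identities
  have hES : M.E \ ((M.E \ C) \ S) = S ∪ C := by
    ext x
    simp only [Set.mem_diff, Set.mem_union]
    constructor
    · rintro ⟨hxE, hx⟩
      by_cases hxC : x ∈ C
      · exact Or.inr hxC
      by_cases hxS : x ∈ S
      · exact Or.inl hxS
      · exact absurd ⟨⟨hxE, hxC⟩, hxS⟩ hx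
    · rintro (hxS | hxC)
      · exact ⟨(hS hxS).1, fun h => h.2 hxS⟩
      · exact ⟨hC hxC, fun h => h.1.2 hxC⟩
  have hcard : S.ncard + ((M.E \ C) \ S).ncard = (M.E \ C).ncard := by
    have := Set.ncard_diff_add_ncard_of_subset hS (hfin.diff (t := C))
    omega
  have h1' : N.rkSet (N.E \ S) = M✶.rkSet ((M.E \ C) \ S) := by
    rw [hNE]; exact hNrk _ diff_subset
  rw [hES] at h2
  rw [hconN]
  omega

lemma con_rank_add (hfin : M.E.Finite) {C : Set α} (hC : C ⊆ M.E) :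
    (M.con C).rank + M.rkSet C = M.rank := by
  have h := con_rkSet_add (M := M) hfin hC (S := M.E \ C) subset_rfl
  rw [diff_union_of_subset hC] at h
  exact h

lemma con_rkSet_add' (hfin : M.E.Finite) {C S : Set α} (hC : C ⊆ M.E) (hS : S ⊆ M.E \ C) :
    ((M.con C).rkSet S : ℚ) = (M.rkSet (S ∪ C) : ℚ) - M.rkSet C := by
  have := con_rkSet_add (M := M) hfin hC hS
  push_cast [← this]
  ring

lemma flat_closure (M : Matroid α) (X : Set α) : M.IsFlat (M.closure X) := by
  have hne : Nonempty ↑{F | M.IsFlat F ∧ X ∩ M.E ⊆ F} :=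
    ⟨⟨M.E, ⟨M.ground_isFlat, inter_subset_right⟩⟩⟩
  rw [Matroid.closure_def, sInter_eq_iInter]
  exact Matroid.IsFlat.iInter fun F => F.2.1

lemma closure_subset_flat {K : Set α} (hX : X ⊆ M.E) (hK : M.IsFlat K) (hXK : X ⊆ K) :
    M.closure X ⊆ K := by
  have := M.closure_subset_closure hXK
  rwa [hK.closure] at this

/-- The finset of all subsets of a finite set. -/
noncomputable def subs (T : Set α) (hT : T.Finite) : Finset (Set α) :=
  hT.toFinset.powerset.map ⟨(↑), Finset.coe_injective⟩

lemma mem_subs {T S : Set α} {hT : T.Finite} : S ∈ subs T hT ↔ S ⊆ T := by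
  simp only [subs, Finset.mem_map, Finset.mem_powerset, Function.Embedding.coeFn_mk]
  constructor
  · rintro ⟨s, hs, rfl⟩
    intro x hx
    exact hT.mem_toFinset.1 (hs hx)
  · intro hS
    refine ⟨(hT.subset hS).toFinset, ?_, (hT.subset hS).coe_toFinset⟩
    intro x hx
    rw [Set.Finite.mem_toFinset] at hx ⊢
    exact hS hx

lemma sum_subs_neg_one_pow (T : Set α) (hT : T.Finite) :
    ∑ S ∈ subs T hT, (-1 : ℚ) ^ S.ncard = if T = ∅ then 1 else 0 := by
  classical
  rw [subs, Finset.sum_map]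
  simp only [Function.Embedding.coeFn_mk, Set.ncard_coe_finset]
  have h := Finset.sum_powerset_neg_one_pow_card (x := hT.toFinset)
  have h2 : (∑ m ∈ hT.toFinset.powerset, (-1 : ℚ) ^ m.card)
      = ((∑ m ∈ hT.toFinset.powerset, (-1 : ℤ) ^ m.card : ℤ) : ℚ) := by
    push_cast
    rfl
  rw [h2, h]
  by_cases hTe : T = ∅
  · simp [hTe, Set.Finite.toFinset_eq_empty.2 hTe]
  · simp [hTe, fun h => hTe (Set.Finite.toFinset_eq_empty.1 h)]

lemma finsum_cond_eq_sum (f : Set α → ℚ) (P : Set α → Prop) (hP : {S | P S}.Finite) :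
    (∑ᶠ (S : Set α) (_ : P S), f S) = ∑ S ∈ hP.toFinset, f S := by
  rw [← finsum_mem_coe_finset, Set.Finite.coe_toFinset]
  rfl


section Main

variable (M : Matroid α) (hfin : M.E.Finite)

/-- The finset of flats of `M`. -/
noncomputable def flatsF : Finset (Set α) := (subs M.E hfin).filter M.IsFlat

lemma mem_flatsF {M : Matroid α} {hfin : M.E.Finite} {F : Set α} :
    F ∈ flatsF M hfin ↔ M.IsFlat F := by
  simp only [flatsF, Finset.mem_filter, mem_subs]
  exact ⟨fun h => h.2, fun h => ⟨h.subset_ground, h⟩⟩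

/-- Whitney-style Möbius coefficient of a flat. -/
noncomputable def wq (G : Set α) : ℚ :=
  ∑ A ∈ subs M.E hfin, if M.closure A = G then (-1 : ℚ) ^ A.ncard else 0

/-- Whitney-style relative Möbius coefficient. -/
noncomputable def mq (F H : Set α) : ℚ :=
  ∑ S ∈ subs (M.E \ F) (hfin.diff (t := F)),
    if M.closure (S ∪ F) = H then (-1 : ℚ) ^ S.ncard else 0

variable {M hfin}

lemma zeta_mq {F K : Set α} (hF : M.IsFlat F) (hK : M.IsFlat K) :
    ∑ H ∈ (flatsF M hfin).filter (· ⊆ K), mq M hfin F H = if F = K then 1 else 0 := by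
  have hFE : F ⊆ M.E := hF.subset_ground
  have hKE : K ⊆ M.E := hK.subset_ground
  have main : ∑ H ∈ (flatsF M hfin).filter (· ⊆ K), mq M hfin F H
      = ∑ S ∈ subs (M.E \ F) (hfin.diff (t := F)),
          if M.closure (S ∪ F) ⊆ K then (-1 : ℚ) ^ S.ncard else 0 := by
    simp only [mq]
    rw [Finset.sum_comm]
    refine Finset.sum_congr rfl fun S hS => ?_
    have hcl : M.closure (S ∪ F) ∈ flatsF M hfin := mem_flatsF.2 (flat_closure M _)
    rw [Finset.sum_filter]
    have hsw : ∀ H, (if H ⊆ K then (if M.closure (S ∪ F) = H then (-1 : ℚ) ^ S.ncard else 0)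
        else 0)
        = if M.closure (S ∪ F) = H then
            (if M.closure (S ∪ F) ⊆ K then (-1 : ℚ) ^ S.ncard else 0) else 0 := by
      intro H
      by_cases h1 : M.closure (S ∪ F) = H
      · subst h1; simp
      · simp [h1]
    rw [Finset.sum_congr rfl fun H _ => hsw H, Finset.sum_ite_eq, if_pos hcl]
  rw [main]
  by_cases hFK : F ⊆ K
  · have hKF : (K \ F).Finite := (hfin.subset hKE).diff (t := F)
    have hset : (subs (M.E \ F) (hfin.diff (t := F))).filter (fun S => M.closure (S ∪ F) ⊆ K)
        = subs (K \ F) hKF := by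
      ext S
      simp only [Finset.mem_filter, mem_subs]
      constructor
      · rintro ⟨hSE, hcl⟩
        have hSK : S ⊆ K := (subset_union_left.trans
          (M.subset_closure (S ∪ F) (union_subset (hSE.trans diff_subset) hFE))).trans hcl
        exact subset_diff.2 ⟨hSK, (subset_diff.1 hSE).2⟩
      · intro hSKF
        have hSE : S ⊆ M.E \ F := hSKF.trans (diff_subset_diff_left hKE)
        exact ⟨hSE, closure_subset_flat (union_subset (hSE.trans diff_subset) hFE) hK
          (union_subset (hSKF.trans diff_subset) hFK)⟩
    rw [← Finset.sum_filter, hset, sum_subs_neg_one_pow]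
    by_cases hFK2 : F = K
    · simp [hFK2]
    · have hne : K \ F ≠ ∅ := fun h => hFK2 (subset_antisymm hFK (diff_eq_empty.1 h))
      simp [hFK2, hne]
  · rw [Finset.sum_eq_zero, if_neg (fun h : F = K => hFK (h ▸ subset_rfl))]
    intro S hS
    rw [if_neg]
    intro hcl
    exact hFK ((subset_union_right.trans (M.subset_closure (S ∪ F)
      (union_subset ((mem_subs.1 hS).trans diff_subset) hFE))).trans hcl)

lemma row_mq {F : Set α} (hF : M.IsFlat F) :
    ∑ H ∈ flatsF M hfin, mq M hfin F H = if F = M.E then 1 else 0 := by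
  have h := zeta_mq (hfin := hfin) hF M.ground_isFlat
  rwa [Finset.filter_true_of_mem (fun H hH => (mem_flatsF.1 hH).subset_ground)] at h

lemma matrix_mq {G H : Set α} (hG : G ∈ flatsF M hfin) (hH : H ∈ flatsF M hfin) :
    ∑ F ∈ (flatsF M hfin).filter (fun F => G ⊆ F), mq M hfin F H
      = if G = H then 1 else 0 := by
  classical
  set τ := flatsF M hfin with hτ
  let Mm : Matrix ↥τ ↥τ ℚ := fun F H => mq M hfin F.1 H.1
  let Z : Matrix ↥τ ↥τ ℚ := fun G F => if G.1 ⊆ F.1 then 1 else 0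
  have hMZ : Mm * Z = 1 := by
    ext F K
    rw [Matrix.mul_apply, Matrix.one_apply]
    have step : ∑ J : ↥τ, Mm F J * Z J K
        = ∑ J ∈ τ.filter (· ⊆ K.1), mq M hfin F.1 J := by
      rw [Finset.sum_filter]
      rw [← Finset.sum_coe_sort τ (fun J => if J ⊆ K.1 then mq M hfin F.1 J else 0)]
      refine Finset.sum_congr rfl fun J _ => ?_
      simp only [Mm, Z, mul_ite, mul_one, mul_zero]
    rw [step, zeta_mq (hfin := hfin) (mem_flatsF.1 F.2) (mem_flatsF.1 K.2)]
    by_cases h : F = K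
    · rw [if_pos (congrArg Subtype.val h), if_pos h]
    · rw [if_neg (fun h2 => h (Subtype.ext h2)), if_neg h]
  have hZM : Z * Mm = 1 := mul_eq_one_comm.mp hMZ
  have hent := congrFun (congrFun hZM ⟨G, hG⟩) ⟨H, hH⟩
  rw [Matrix.mul_apply, Matrix.one_apply] at hent
  have step : ∑ F : ↥τ, Z ⟨G, hG⟩ F * Mm F ⟨H, hH⟩
      = ∑ F ∈ τ.filter (fun F => G ⊆ F), mq M hfin F H := by
    rw [Finset.sum_filter]
    rw [← Finset.sum_coe_sort τ (fun F => if G ⊆ F then mq M hfin F H else 0)]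
    refine Finset.sum_congr rfl fun F _ => ?_
    simp only [Mm, Z, ite_mul, one_mul, zero_mul]
  rw [step] at hent
  rw [hent]
  by_cases h : G = H
  · rw [if_pos (Subtype.ext h), if_pos h]
  · rw [if_neg (fun h2 => h (congrArg Subtype.val h2)), if_neg h]

lemma inv_mq {G : Set α} (hG : G ∈ flatsF M hfin) :
    ∑ F ∈ (flatsF M hfin).filter (fun F => G ⊆ F),
        (∑ H ∈ flatsF M hfin, mq M hfin F H * ((M.rkSet H : ℚ) - (M.rkSet F : ℚ)))
      = (M.rkSet G : ℚ) - (M.rank : ℚ) := by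
  have hGE : G ⊆ M.E := (mem_flatsF.1 hG).subset_ground
  have hsplit : ∀ F ∈ (flatsF M hfin).filter (fun F => G ⊆ F),
      ∑ H ∈ flatsF M hfin, mq M hfin F H * ((M.rkSet H : ℚ) - (M.rkSet F : ℚ))
        = (∑ H ∈ flatsF M hfin, mq M hfin F H * (M.rkSet H : ℚ))
          - (∑ H ∈ flatsF M hfin, mq M hfin F H) * (M.rkSet F : ℚ) := by
    intro F _
    rw [Finset.sum_mul, ← Finset.sum_sub_distrib]
    exact Finset.sum_congr rfl fun H _ => by ring
  rw [Finset.sum_congr rfl hsplit, Finset.sum_sub_distrib]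
  have h1 : ∑ F ∈ (flatsF M hfin).filter (fun F => G ⊆ F),
      (∑ H ∈ flatsF M hfin, mq M hfin F H * (M.rkSet H : ℚ)) = (M.rkSet G : ℚ) := by
    rw [Finset.sum_comm]
    have hstep : ∀ H ∈ flatsF M hfin,
        ∑ F ∈ (flatsF M hfin).filter (fun F => G ⊆ F), mq M hfin F H * (M.rkSet H : ℚ)
          = (if G = H then 1 else 0) * (M.rkSet H : ℚ) := by
      intro H hH
      rw [← Finset.sum_mul, matrix_mq hG hH]
    rw [Finset.sum_congr rfl hstep]
    simp only [ite_mul, one_mul, zero_mul]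
    rw [Finset.sum_ite_eq, if_pos hG]
  have h2 : ∑ F ∈ (flatsF M hfin).filter (fun F => G ⊆ F),
      (∑ H ∈ flatsF M hfin, mq M hfin F H) * (M.rkSet F : ℚ) = (M.rank : ℚ) := by
    have hstep : ∀ F ∈ (flatsF M hfin).filter (fun F => G ⊆ F),
        (∑ H ∈ flatsF M hfin, mq M hfin F H) * (M.rkSet F : ℚ)
          = if F = M.E then (M.rkSet F : ℚ) else 0 := by
      intro F hF
      rw [row_mq (mem_flatsF.1 (Finset.mem_filter.1 hF).1)]
      by_cases h : F = M.E <;> simp [h]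
    rw [Finset.sum_congr rfl hstep, Finset.sum_ite_eq', if_pos]
    · rfl
    · exact Finset.mem_filter.2 ⟨mem_flatsF.2 M.ground_isFlat, hGE⟩
  rw [h1, h2]

lemma cval_mq {G : Set α} {a : α} (ha : a ∈ M.E) (hG : G ∈ flatsF M hfin) :
    ∑ F ∈ (flatsF M hfin).filter (fun F => G ⊆ F ∧ a ∉ F),
        (∑ H ∈ flatsF M hfin, mq M hfin F H * ((M.rkSet H : ℚ) - (M.rkSet F : ℚ)))
      = if a ∈ G then 0 else -1 := by
  set G' := M.closure (G ∪ {a}) with hG'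
  have hGflat := mem_flatsF.1 hG
  have hGE := hGflat.subset_ground
  have hGaE : G ∪ {a} ⊆ M.E := union_subset hGE (singleton_subset_iff.2 ha)
  have hG'mem : G' ∈ flatsF M hfin := mem_flatsF.2 (flat_closure M _)
  have key := inv_mq (hfin := hfin) hG
  have key' := inv_mq (hfin := hfin) hG'mem
  have hfiltereq : (flatsF M hfin).filter (fun F => G ⊆ F ∧ a ∈ F)
      = (flatsF M hfin).filter (fun F => G' ⊆ F) := by
    ext F
    simp only [Finset.mem_filter]
    constructor
    · rintro ⟨hFm, hGF, haF⟩
      exact ⟨hFm, closure_subset_flat hGaE (mem_flatsF.1 hFm)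
        (union_subset hGF (singleton_subset_iff.2 haF))⟩
    · rintro ⟨hFm, hG'F⟩
      refine ⟨hFm, (subset_union_left.trans (M.subset_closure _ hGaE)).trans hG'F, ?_⟩
      exact hG'F (M.subset_closure _ hGaE (by simp))
  have hsum := Finset.sum_filter_add_sum_filter_not
    ((flatsF M hfin).filter (fun F => G ⊆ F)) (fun F => a ∈ F)
    (fun F => ∑ H ∈ flatsF M hfin, mq M hfin F H * ((M.rkSet H : ℚ) - (M.rkSet F : ℚ)))
  rw [Finset.filter_filter, Finset.filter_filter, key, hfiltereq, key'] at hsum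
  have hmain : ∑ F ∈ (flatsF M hfin).filter (fun F => G ⊆ F ∧ a ∉ F),
      (∑ H ∈ flatsF M hfin, mq M hfin F H * ((M.rkSet H : ℚ) - (M.rkSet F : ℚ)))
        = (M.rkSet G : ℚ) - (M.rkSet G' : ℚ) := by linarith
  rw [hmain]
  by_cases haG : a ∈ G
  · have hGG : G' = G := by
      rw [hG', union_eq_self_of_subset_right (singleton_subset_iff.2 haG), hGflat.closure]
    simp [haG, hGG]
  · have hacl : a ∉ M.closure G := by rwa [hGflat.closure]
    have h1 : M.rkSet G' = M.rkSet G + 1 := by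
      rw [hG', rkSet_closure hfin hGaE, union_singleton,
        rkSet_insert_of_not_mem_closure hfin hGE ha hacl]
    rw [if_neg haG, h1]
    push_cast
    ring

lemma charPoly_restrict_eq {F : Set α} (hF : M.IsFlat F) (t : ℚ) :
    (M ↾ F).charPoly t
      = ∑ G ∈ (flatsF M hfin).filter (· ⊆ F),
          wq M hfin G * t ^ (M.rkSet F - M.rkSet G) := by
  have hFE := hF.subset_ground
  have hFfin : F.Finite := hfin.subset hFE
  have hP : {S : Set α | S ⊆ (M ↾ F).E}.Finite := hFfin.finite_subsets
  have ha : (M ↾ F).charPoly t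
      = ∑ A ∈ subs F hFfin, (-1 : ℚ) ^ A.ncard * t ^ (M.rkSet F - M.rkSet A) := by
    unfold Matroid.charPoly
    rw [finsum_cond_eq_sum _ _ hP]
    have hfs : hP.toFinset = subs F hFfin := by
      ext S
      simp [mem_subs, Set.Finite.mem_toFinset]
    rw [hfs]
    refine Finset.sum_congr rfl fun A hA => ?_
    have hAF : A ⊆ F := mem_subs.1 hA
    have hrk : (M ↾ F).rank = M.rkSet F := by
      unfold Matroid.rank
      rw [Matroid.restrict_ground_eq]
      exact restrict_rkSet subset_rfl
    rw [restrict_rkSet hAF, hrk]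
  rw [ha]
  have hmap : ∀ A ∈ subs F hFfin, M.closure A ∈ (flatsF M hfin).filter (· ⊆ F) :=
    fun A hA => Finset.mem_filter.2 ⟨mem_flatsF.2 (flat_closure M A),
      closure_subset_flat ((mem_subs.1 hA).trans hFE) hF (mem_subs.1 hA)⟩
  rw [← Finset.sum_fiberwise_of_maps_to hmap
    (fun A => (-1 : ℚ) ^ A.ncard * t ^ (M.rkSet F - M.rkSet A))]
  refine Finset.sum_congr rfl fun G hG => ?_
  obtain ⟨hGmem, hGF⟩ := Finset.mem_filter.1 hG
  have hinner : ∀ A ∈ (subs F hFfin).filter (fun A => M.closure A = G),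
      (-1 : ℚ) ^ A.ncard * t ^ (M.rkSet F - M.rkSet A)
        = (-1 : ℚ) ^ A.ncard * t ^ (M.rkSet F - M.rkSet G) := by
    intro A hA
    obtain ⟨hAm, hclA⟩ := Finset.mem_filter.1 hA
    rw [← hclA, rkSet_closure hfin ((mem_subs.1 hAm).trans hFE)]
  rw [Finset.sum_congr rfl hinner, ← Finset.sum_mul]
  have hw : ∑ A ∈ (subs F hFfin).filter (fun A => M.closure A = G), (-1 : ℚ) ^ A.ncard
      = wq M hfin G := by
    unfold wq
    rw [← Finset.sum_filter]
    refine Finset.sum_congr ?_ fun _ _ => rfl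
    ext A
    simp only [Finset.mem_filter, mem_subs]
    constructor
    · rintro ⟨hAF, hcl⟩
      exact ⟨hAF.trans hFE, hcl⟩
    · rintro ⟨hAE, hcl⟩
      exact ⟨(M.subset_closure A hAE).trans (hcl ▸ hGF), hcl⟩
  rw [hw]

lemma charPoly_eq (t : ℚ) :
    M.charPoly t = ∑ G ∈ flatsF M hfin, wq M hfin G * t ^ (M.rank - M.rkSet G) := by
  have h := charPoly_restrict_eq (hfin := hfin) M.ground_isFlat t
  rw [M.restrict_ground_eq_self] at h
  rw [h, Finset.filter_true_of_mem (fun H hH => (mem_flatsF.1 hH).subset_ground)]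
  rfl

lemma betaInv_con_eq {F : Set α} (hF : M.IsFlat F) :
    (M.con F).betaInv
      = (-1 : ℚ) ^ (M.con F).rank *
          ∑ H ∈ flatsF M hfin, mq M hfin F H * ((M.rkSet H : ℚ) - (M.rkSet F : ℚ)) := by
  have hFE := hF.subset_ground
  have hEF : (M.E \ F).Finite := hfin.diff (t := F)
  unfold Matroid.betaInv
  congr 1
  have hP : {S : Set α | S ⊆ (M.con F).E}.Finite := hEF.finite_subsets
  rw [finsum_cond_eq_sum _ _ hP]
  have hfs : hP.toFinset = subs (M.E \ F) hEF := by
    ext S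
    simp only [Set.Finite.mem_toFinset, mem_setOf_eq, mem_subs]
    rfl
  rw [hfs]
  have hstep : ∀ S ∈ subs (M.E \ F) hEF,
      (-1 : ℚ) ^ S.ncard * ((M.con F).rkSet S : ℚ)
        = (-1 : ℚ) ^ S.ncard * ((M.rkSet (S ∪ F) : ℚ) - (M.rkSet F : ℚ)) := by
    intro S hS
    rw [con_rkSet_add' hfin hFE (mem_subs.1 hS)]
  rw [Finset.sum_congr rfl hstep]
  have hmap : ∀ S ∈ subs (M.E \ F) hEF, M.closure (S ∪ F) ∈ flatsF M hfin :=
    fun S hS => mem_flatsF.2 (flat_closure M _)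
  rw [← Finset.sum_fiberwise_of_maps_to hmap
    (fun S => (-1 : ℚ) ^ S.ncard * ((M.rkSet (S ∪ F) : ℚ) - (M.rkSet F : ℚ)))]
  refine Finset.sum_congr rfl fun H hH => ?_
  have hinner : ∀ S ∈ (subs (M.E \ F) hEF).filter (fun S => M.closure (S ∪ F) = H),
      (-1 : ℚ) ^ S.ncard * ((M.rkSet (S ∪ F) : ℚ) - (M.rkSet F : ℚ))
        = (-1 : ℚ) ^ S.ncard * ((M.rkSet H : ℚ) - (M.rkSet F : ℚ)) := by
    intro S hS
    obtain ⟨hSm, hcl⟩ := Finset.mem_filter.1 hS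
    rw [← hcl, rkSet_closure hfin (union_subset ((mem_subs.1 hSm).trans diff_subset) hFE)]
  rw [Finset.sum_congr rfl hinner, ← Finset.sum_mul]
  have hm : ∑ S ∈ (subs (M.E \ F) hEF).filter (fun S => M.closure (S ∪ F) = H),
      (-1 : ℚ) ^ S.ncard = mq M hfin F H := by
    unfold mq
    rw [← Finset.sum_filter]
  rw [hm]

lemma rkSet_insert_of_mem_closure {X : Set α} {e : α} (hfin : M.E.Finite) (hX : X ⊆ M.E)
    (he : e ∈ M.closure X) : M.rkSet (insert e X) = M.rkSet X := by
  refine le_antisymm ?_ (rkSet_mono hfin (subset_insert e X))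
  calc M.rkSet (insert e X) ≤ M.rkSet (M.closure X) :=
        rkSet_mono hfin (insert_subset he (M.subset_closure X hX))
    _ = M.rkSet X := rkSet_closure hfin hX

lemma star_eq {a : α} (ha : a ∈ M.E) (t : ℚ) :
    ∑ G ∈ (flatsF M hfin).filter (fun G => a ∈ G), wq M hfin G * t ^ (M.rank - M.rkSet G)
      = - ∑ G ∈ (flatsF M hfin).filter (fun G => a ∉ G),
            wq M hfin G * t ^ (M.rank - M.rkSet G - 1) := by
  have hA : ∑ G ∈ (flatsF M hfin).filter (fun G => a ∈ G), wq M hfin G * t ^ (M.rank - M.rkSet G)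
      = ∑ S ∈ (subs M.E hfin).filter (fun S => a ∈ M.closure S),
          (-1 : ℚ) ^ S.ncard * t ^ (M.rank - M.rkSet S) := by
    have hmap : ∀ S ∈ (subs M.E hfin).filter (fun S => a ∈ M.closure S),
        M.closure S ∈ (flatsF M hfin).filter (fun G => a ∈ G) := fun S hS => by
      obtain ⟨hSm, hpS⟩ := Finset.mem_filter.1 hS
      exact Finset.mem_filter.2 ⟨mem_flatsF.2 (flat_closure M S), hpS⟩
    rw [← Finset.sum_fiberwise_of_maps_to hmap
      (fun S => (-1 : ℚ) ^ S.ncard * t ^ (M.rank - M.rkSet S))]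
    refine Finset.sum_congr rfl fun G hG => ?_
    obtain ⟨hGm, hpG⟩ := Finset.mem_filter.1 hG
    have hinner : ∀ S ∈ ((subs M.E hfin).filter
        (fun S => a ∈ M.closure S)).filter (fun S => M.closure S = G),
        (-1 : ℚ) ^ S.ncard * t ^ (M.rank - M.rkSet S)
          = (-1 : ℚ) ^ S.ncard * t ^ (M.rank - M.rkSet G) := by
      intro S hS
      obtain ⟨hmm, hcl⟩ := Finset.mem_filter.1 hS
      obtain ⟨hSm, -⟩ := Finset.mem_filter.1 hmm
      rw [← hcl, rkSet_closure hfin (mem_subs.1 hSm)]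
    rw [Finset.sum_congr rfl hinner, ← Finset.sum_mul]
    have hw : ∑ S ∈ ((subs M.E hfin).filter
        (fun S => a ∈ M.closure S)).filter (fun S => M.closure S = G),
        (-1 : ℚ) ^ S.ncard = wq M hfin G := by
      unfold wq
      rw [← Finset.sum_filter]
      refine Finset.sum_congr ?_ fun _ _ => rfl
      rw [Finset.filter_filter]
      refine Finset.filter_congr fun S hS => ?_
      constructor
      · rintro ⟨_, h⟩
        exact h
      · intro h
        exact ⟨h ▸ hpG, h⟩
    rw [hw]
  have hB : ∑ G ∈ (flatsF M hfin).filter (fun G => a ∉ G), wq M hfin G * t ^ (M.rank - M.rkSet G - 1)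
      = ∑ S ∈ (subs M.E hfin).filter (fun S => a ∉ M.closure S),
          (-1 : ℚ) ^ S.ncard * t ^ (M.rank - M.rkSet S - 1) := by
    have hmap : ∀ S ∈ (subs M.E hfin).filter (fun S => a ∉ M.closure S),
        M.closure S ∈ (flatsF M hfin).filter (fun G => a ∉ G) := fun S hS => by
      obtain ⟨hSm, hpS⟩ := Finset.mem_filter.1 hS
      exact Finset.mem_filter.2 ⟨mem_flatsF.2 (flat_closure M S), hpS⟩
    rw [← Finset.sum_fiberwise_of_maps_to hmap
      (fun S => (-1 : ℚ) ^ S.ncard * t ^ (M.rank - M.rkSet S - 1))]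
    refine Finset.sum_congr rfl fun G hG => ?_
    obtain ⟨hGm, hpG⟩ := Finset.mem_filter.1 hG
    have hinner : ∀ S ∈ ((subs M.E hfin).filter
        (fun S => a ∉ M.closure S)).filter (fun S => M.closure S = G),
        (-1 : ℚ) ^ S.ncard * t ^ (M.rank - M.rkSet S - 1)
          = (-1 : ℚ) ^ S.ncard * t ^ (M.rank - M.rkSet G - 1) := by
      intro S hS
      obtain ⟨hmm, hcl⟩ := Finset.mem_filter.1 hS
      obtain ⟨hSm, -⟩ := Finset.mem_filter.1 hmm
      rw [← hcl, rkSet_closure hfin (mem_subs.1 hSm)]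
    rw [Finset.sum_congr rfl hinner, ← Finset.sum_mul]
    have hw : ∑ S ∈ ((subs M.E hfin).filter
        (fun S => a ∉ M.closure S)).filter (fun S => M.closure S = G),
        (-1 : ℚ) ^ S.ncard = wq M hfin G := by
      unfold wq
      rw [← Finset.sum_filter]
      refine Finset.sum_congr ?_ fun _ _ => rfl
      rw [Finset.filter_filter]
      refine Finset.filter_congr fun S hS => ?_
      constructor
      · rintro ⟨_, h⟩
        exact h
      · intro h
        exact ⟨h ▸ hpG, h⟩
    rw [hw]
  rw [hA, hB]
  -- now a pure subset-sum identity
  set f : Set α → ℚ := fun S => (-1 : ℚ) ^ S.ncard * t ^ (M.rank - M.rkSet S) with hf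
  set g : Set α → ℚ := fun S => (-1 : ℚ) ^ S.ncard * t ^ (M.rank - M.rkSet S - 1) with hg
  set q : Set α → Prop := fun S => a ∈ S ∧ a ∉ M.closure (S \ {a}) with hq
  have hsplit := Finset.sum_filter_add_sum_filter_not
    ((subs M.E hfin).filter (fun S => a ∈ M.closure S)) q f
  have hzero : ∑ S ∈ ((subs M.E hfin).filter
      (fun S => a ∈ M.closure S)).filter (fun S => ¬ q S), f S = 0 := by
    refine Finset.sum_involution
      (fun S _ => if a ∈ S then S \ {a} else insert a S) ?_ ?_ ?_ ?_
    · -- f S + f (g S) = 0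
      intro S hS
      beta_reduce
      obtain ⟨hSmm, hnq⟩ := Finset.mem_filter.1 hS
      obtain ⟨hSm, hacl⟩ := Finset.mem_filter.1 hSmm
      have hSE : S ⊆ M.E := mem_subs.1 hSm
      have hSfin : S.Finite := hfin.subset hSE
      by_cases haS : a ∈ S
      · have hacl' : a ∈ M.closure (S \ {a}) := by
          by_contra hc
          exact hnq ⟨haS, hc⟩
        have hS'E : S \ {a} ⊆ M.E := diff_subset.trans hSE
        have hSrepr : S = insert a (S \ {a}) := by
          rw [insert_diff_singleton, insert_eq_of_mem haS]
        rw [if_pos haS]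
        have hrk : M.rkSet S = M.rkSet (S \ {a}) := by
          conv_lhs => rw [hSrepr]
          exact rkSet_insert_of_mem_closure hfin hS'E hacl'
        have hcard : S.ncard = (S \ {a}).ncard + 1 :=
          (Set.ncard_diff_singleton_add_one haS hSfin).symm
        simp only [hf]
        rw [hrk, hcard, pow_succ]
        ring
      · rw [if_neg haS]
        simp only [hf]
        rw [rkSet_insert_of_mem_closure hfin hSE hacl,
          Set.ncard_insert_of_notMem haS hSfin, pow_succ]
        ring
    · intro S hS hfS
      beta_reduce
      by_cases haS : a ∈ S
      · rw [if_pos haS]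
        intro h
        have : a ∈ S \ {a} := h.symm ▸ haS
        exact this.2 rfl
      · rw [if_neg haS]
        intro h
        exact haS (h ▸ mem_insert a S)
    · intro S hS
      beta_reduce
      obtain ⟨hSmm, hnq⟩ := Finset.mem_filter.1 hS
      obtain ⟨hSm, hacl⟩ := Finset.mem_filter.1 hSmm
      have hSE : S ⊆ M.E := mem_subs.1 hSm
      by_cases haS : a ∈ S
      · have hacl' : a ∈ M.closure (S \ {a}) := by
          by_contra hc
          exact hnq ⟨haS, hc⟩
        rw [if_pos haS]
        exact Finset.mem_filter.2 ⟨Finset.mem_filter.2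
          ⟨mem_subs.2 (diff_subset.trans hSE), hacl'⟩, fun hq' => hq'.1.2 rfl⟩
      · rw [if_neg haS]
        refine Finset.mem_filter.2 ⟨Finset.mem_filter.2
          ⟨mem_subs.2 (insert_subset ha hSE), ?_⟩, ?_⟩
        · exact M.closure_subset_closure (subset_insert a S) hacl
        · intro hq'
          exact hq'.2 (by rwa [insert_diff_self_of_notMem haS])
    · intro S hS
      beta_reduce
      by_cases haS : a ∈ S
      · simp only [if_pos haS]
        have : a ∉ S \ {a} := fun h => h.2 rfl
        rw [if_neg this, insert_diff_singleton, insert_eq_of_mem haS]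
      · simp only [if_neg haS]
        rw [if_pos (mem_insert a S), insert_diff_self_of_notMem haS]
  have hbij : ∑ S ∈ ((subs M.E hfin).filter
      (fun S => a ∈ M.closure S)).filter (fun S => q S), f S
      = ∑ S ∈ (subs M.E hfin).filter (fun S => a ∉ M.closure S), - g S := by
    refine Finset.sum_nbij' (fun S => S \ {a}) (fun S => insert a S) ?_ ?_ ?_ ?_ ?_
    · intro S hS
      obtain ⟨hSmm, hqS⟩ := Finset.mem_filter.1 hS
      obtain ⟨hSm, _⟩ := Finset.mem_filter.1 hSmm
      exact Finset.mem_filter.2 ⟨mem_subs.2 (diff_subset.trans (mem_subs.1 hSm)), hqS.2⟩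
    · intro S hS
      obtain ⟨hSm, hacl⟩ := Finset.mem_filter.1 hS
      have hSE : S ⊆ M.E := mem_subs.1 hSm
      have haS : a ∉ S := fun h => hacl (M.subset_closure S hSE h)
      have hiE : insert a S ⊆ M.E := insert_subset ha hSE
      refine Finset.mem_filter.2 ⟨Finset.mem_filter.2 ⟨mem_subs.2 hiE, ?_⟩, ?_⟩
      · exact M.subset_closure _ hiE (mem_insert a S)
      · refine ⟨mem_insert a S, ?_⟩
        rwa [insert_diff_self_of_notMem haS]
    · intro S hS
      beta_reduce
      obtain ⟨_, hqS⟩ := Finset.mem_filter.1 hS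
      rw [insert_diff_singleton, insert_eq_of_mem hqS.1]
    · intro S hS
      obtain ⟨hSm, hacl⟩ := Finset.mem_filter.1 hS
      have haS : a ∉ S := fun h => hacl (M.subset_closure S (mem_subs.1 hSm) h)
      beta_reduce
      rw [insert_diff_self_of_notMem haS]
    · intro S hS
      obtain ⟨hSmm, hqS⟩ := Finset.mem_filter.1 hS
      obtain ⟨hSm, _⟩ := Finset.mem_filter.1 hSmm
      have hSE : S ⊆ M.E := mem_subs.1 hSm
      have hSfin : S.Finite := hfin.subset hSE
      have hS'E : S \ {a} ⊆ M.E := diff_subset.trans hSE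
      have hrk : M.rkSet S = M.rkSet (S \ {a}) + 1 := by
        conv_lhs => rw [show S = insert a (S \ {a}) by
          rw [insert_diff_singleton, insert_eq_of_mem hqS.1]]
        exact rkSet_insert_of_not_mem_closure hfin hS'E ha hqS.2
      have hcard : S.ncard = (S \ {a}).ncard + 1 :=
        (Set.ncard_diff_singleton_add_one hqS.1 hSfin).symm
      beta_reduce
      simp only [hf, hg]
      rw [hrk, hcard, pow_succ]
      have hexp : M.rank - (M.rkSet (S \ {a}) + 1) = M.rank - M.rkSet (S \ {a}) - 1 := by
        omega
      rw [hexp]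
      ring
  rw [← hsplit, hzero, add_zero, hbij]
  rw [Finset.sum_neg_distrib]

end Main

end Aux

open Aux

/-- For a nonempty loopless matroid `M` and an element `a` of its ground set, the reduced
characteristic polynomial satisfies
`χ̄_M(t) = ∑_{F flat, a ∉ F} χ_{M^F}(t) · (-t)^(rk M_F - 1) · β(M_F)`. -/
theorem reduced_charPoly_eq_flat_sum (M : Matroid α) (hfin : M.E.Finite)
    (hl : M.IsLoopless) (a : α) (ha : a ∈ M.E) :
    ∀ t : ℚ, t ≠ 1 →
      M.charPoly t / (t - 1) =
        ∑ᶠ (F : Set α) (_ : M.IsFlat F ∧ a ∉ F),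
          (M ↾ F).charPoly t * (-t) ^ ((M.con F).rank - 1) * (M.con F).betaInv := by
  classical
  intro t ht
  have hP : {F : Set α | M.IsFlat F ∧ a ∉ F}.Finite :=
    Set.Finite.subset hfin.finite_subsets (fun F hF => hF.1.subset_ground)
  rw [finsum_cond_eq_sum _ _ hP]
  have hfs : hP.toFinset = (flatsF M hfin).filter (fun F => a ∉ F) := by
    ext F
    simp only [Set.Finite.mem_toFinset, Set.mem_setOf_eq, Finset.mem_filter, mem_flatsF]
  rw [hfs, div_eq_iff (sub_ne_zero.2 ht)]
  have hterm : ∀ F ∈ (flatsF M hfin).filter (fun F => a ∉ F),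
      (M ↾ F).charPoly t * (-t) ^ ((M.con F).rank - 1) * (M.con F).betaInv
        = ∑ G ∈ (flatsF M hfin).filter (· ⊆ F),
            wq M hfin G * t ^ (M.rank - M.rkSet G - 1) * (- (∑ H ∈ flatsF M hfin, mq M hfin F H * ((M.rkSet H : ℚ) - (M.rkSet F : ℚ)))) := by
    intro F hFm
    obtain ⟨hFf, haF⟩ := Finset.mem_filter.1 hFm
    have hFflat := mem_flatsF.1 hFf
    have hFne : F ≠ M.E := fun h => haF (h ▸ ha)
    have hrlt : M.rkSet F < M.rank := rkSet_lt_rank_of_flat_ne hfin hFflat hFne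
    have hcon := con_rank_add (M := M) hfin hFflat.subset_ground
    have hc1 : 1 ≤ (M.con F).rank := by omega
    rw [charPoly_restrict_eq (hfin := hfin) hFflat t, betaInv_con_eq (hfin := hfin) hFflat,
      Finset.sum_mul, Finset.sum_mul]
    refine Finset.sum_congr rfl fun G hG => ?_
    obtain ⟨hGf, hGF⟩ := Finset.mem_filter.1 hG
    have hGle : M.rkSet G ≤ M.rkSet F := rkSet_mono hfin hGF
    have hexp : (M.rkSet F - M.rkSet G) + ((M.con F).rank - 1) = M.rank - M.rkSet G - 1 := by
      omega
    have hsgn : ((-1 : ℚ)) ^ ((M.con F).rank - 1) * (-1 : ℚ) ^ ((M.con F).rank) = -1 := by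
      obtain ⟨k, hk⟩ : ∃ k, (M.con F).rank = k + 1 := ⟨(M.con F).rank - 1, by omega⟩
      rw [hk, Nat.add_sub_cancel, pow_succ, ← mul_assoc, ← pow_add]
      have hev : Even (k + k) := ⟨k, rfl⟩
      rw [hev.neg_one_pow]
      ring
    rw [neg_pow]
    have hre : wq M hfin G * t ^ (M.rkSet F - M.rkSet G) *
        ((-1 : ℚ) ^ ((M.con F).rank - 1) * t ^ ((M.con F).rank - 1)) *
        ((-1 : ℚ) ^ (M.con F).rank * (∑ H ∈ flatsF M hfin, mq M hfin F H * ((M.rkSet H : ℚ) - (M.rkSet F : ℚ))))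
        = wq M hfin G * (t ^ (M.rkSet F - M.rkSet G) * t ^ ((M.con F).rank - 1)) *
          (((-1 : ℚ) ^ ((M.con F).rank - 1) * (-1 : ℚ) ^ (M.con F).rank) *
            (∑ H ∈ flatsF M hfin, mq M hfin F H * ((M.rkSet H : ℚ) - (M.rkSet F : ℚ)))) := by
      ring
    rw [hre, ← pow_add, hexp, hsgn]
    ring
  rw [Finset.sum_congr rfl hterm]
  have hswap : ∑ F ∈ (flatsF M hfin).filter (fun F => a ∉ F),
      (∑ G ∈ (flatsF M hfin).filter (· ⊆ F), wq M hfin G * t ^ (M.rank - M.rkSet G - 1) * (- (∑ H ∈ flatsF M hfin, mq M hfin F H * ((M.rkSet H : ℚ) - (M.rkSet F : ℚ)))))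
      = ∑ G ∈ flatsF M hfin, wq M hfin G * t ^ (M.rank - M.rkSet G - 1) * (if a ∈ G then 0 else 1) := by
    have e1 : ∀ F ∈ (flatsF M hfin).filter (fun F => a ∉ F),
        (∑ G ∈ (flatsF M hfin).filter (· ⊆ F), wq M hfin G * t ^ (M.rank - M.rkSet G - 1) * (- (∑ H ∈ flatsF M hfin, mq M hfin F H * ((M.rkSet H : ℚ) - (M.rkSet F : ℚ)))))
          = ∑ G ∈ flatsF M hfin, if G ⊆ F then wq M hfin G * t ^ (M.rank - M.rkSet G - 1) * (- (∑ H ∈ flatsF M hfin, mq M hfin F H * ((M.rkSet H : ℚ) - (M.rkSet F : ℚ)))) else 0 :=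
      fun F _ => Finset.sum_filter _ _
    rw [Finset.sum_congr rfl e1, Finset.sum_comm]
    refine Finset.sum_congr rfl fun G hG => ?_
    rw [← Finset.sum_filter, Finset.filter_filter]
    have hfc : (flatsF M hfin).filter (fun F => a ∉ F ∧ G ⊆ F)
        = (flatsF M hfin).filter (fun F => G ⊆ F ∧ a ∉ F) :=
      Finset.filter_congr fun F _ => and_comm
    rw [hfc]
    have hpull : ∑ F ∈ (flatsF M hfin).filter (fun F => G ⊆ F ∧ a ∉ F),
        wq M hfin G * t ^ (M.rank - M.rkSet G - 1) * (- (∑ H ∈ flatsF M hfin, mq M hfin F H * ((M.rkSet H : ℚ) - (M.rkSet F : ℚ))))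
        = wq M hfin G * t ^ (M.rank - M.rkSet G - 1) * (- ∑ F ∈ (flatsF M hfin).filter (fun F => G ⊆ F ∧ a ∉ F), (∑ H ∈ flatsF M hfin, mq M hfin F H * ((M.rkSet H : ℚ) - (M.rkSet F : ℚ)))) := by
      rw [← Finset.sum_neg_distrib, Finset.mul_sum]
    rw [hpull, cval_mq (hfin := hfin) ha hG]
    congr 1
    split_ifs <;> ring
  rw [hswap]
  have hcollapse : ∑ G ∈ flatsF M hfin, wq M hfin G * t ^ (M.rank - M.rkSet G - 1) * (if a ∈ G then 0 else 1)
      = ∑ G ∈ (flatsF M hfin).filter (fun G => a ∉ G), wq M hfin G * t ^ (M.rank - M.rkSet G - 1) := by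
    calc ∑ G ∈ flatsF M hfin, wq M hfin G * t ^ (M.rank - M.rkSet G - 1) * (if a ∈ G then 0 else 1)
        = ∑ G ∈ flatsF M hfin, (if a ∉ G then wq M hfin G * t ^ (M.rank - M.rkSet G - 1) else 0) :=
          Finset.sum_congr rfl fun G _ => by by_cases h : a ∈ G <;> simp [h]
      _ = ∑ G ∈ (flatsF M hfin).filter (fun G => a ∉ G), wq M hfin G * t ^ (M.rank - M.rkSet G - 1) :=
          (Finset.sum_filter _ _).symm
  rw [hcollapse]
  have hstar := star_eq (M := M) (hfin := hfin) ha t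
  have hchar := charPoly_eq (M := M) (hfin := hfin) t
  have hsplitC := Finset.sum_filter_add_sum_filter_not (flatsF M hfin)
    (fun G => a ∈ G) (fun G => wq M hfin G * t ^ (M.rank - M.rkSet G))
  have hpow : ∀ G ∈ (flatsF M hfin).filter (fun G => ¬ a ∈ G),
      wq M hfin G * t ^ (M.rank - M.rkSet G) = wq M hfin G * t ^ (M.rank - M.rkSet G - 1) * t := by
    intro G hG
    obtain ⟨hGf, haG⟩ := Finset.mem_filter.1 hG
    have hGlt : M.rkSet G < M.rank :=
      rkSet_lt_rank_of_flat_ne hfin (mem_flatsF.1 hGf) (fun h => haG (h ▸ ha))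
    rw [mul_assoc, ← pow_succ]
    congr 2
    omega
  rw [hchar, ← hsplitC, hstar, Finset.sum_congr rfl hpow, ← Finset.sum_mul]
  ring
end

section
/- For any nonempty loopless matroid M, Σ_{F ∈ L(M)} t^{rk F} · χ_{M^F}(1/t) · χ_{M_F}(t) = 0 as an identity of Laurent polynomials (equivalently, rational functions) in t, where the sum is over all flats F of M (including ∅ and the whole ground set). -/
open scoped Matroid

variable {α : Type*}

open Set

namespace Matroid

variable {M : Matroid α} {X Y F G H K A B C I J : Set α}

lemma IsLoopless.closure_empty (hl : M.IsLoopless) : M.closure ∅ = ∅ := by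
  refine subset_antisymm (fun e he => ?_) (empty_subset _)
  have heE : e ∈ M.E := mem_ground_of_mem_closure he
  rw [M.empty_indep.mem_closure_iff'] at he
  exact absurd (he.2 (by simpa using hl e heE)) (by simp)

lemma flat_closure' (M : Matroid α) (X : Set α) : M.IsFlat (M.closure X) := by
  rw [closure_def, sInter_eq_iInter]
  have hne : Nonempty {F // F ∈ {F | M.IsFlat F ∧ X ∩ M.E ⊆ F}} :=
    ⟨⟨M.E, M.ground_isFlat, inter_subset_right⟩⟩
  exact IsFlat.iInter fun F => F.2.1

lemma IsLoopless.flat_empty (hl : M.IsLoopless) : M.IsFlat ∅ := by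
  have := M.flat_closure' ∅
  rwa [hl.closure_empty] at this

lemma rkSet_eq_ncard (hI : M.Indep I) (hIX : I ⊆ X)
    (hmax : ∀ J, M.Indep J → J ⊆ X → J.ncard ≤ I.ncard) : M.rkSet X = I.ncard := by
  have hbdd : ∀ s : {I : Set α // M.Indep I ∧ I ⊆ X}, s.1.ncard ≤ I.ncard :=
    fun s => hmax s.1 s.2.1 s.2.2
  have hne : Nonempty {I : Set α // M.Indep I ∧ I ⊆ X} := ⟨⟨I, hI, hIX⟩⟩
  refine le_antisymm (ciSup_le hbdd) ?_
  exact le_ciSup (f := fun s : {I : Set α // M.Indep I ∧ I ⊆ X} => s.1.ncard)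
    ⟨I.ncard, by rintro n ⟨s, rfl⟩; exact hbdd s⟩ ⟨I, hI, hIX⟩

lemma IsBasis.rkSet_eq (hfin : M.E.Finite) (hIX : M.IsBasis I X) : M.rkSet X = I.ncard := by
  have hXE := hIX.subset_ground
  refine rkSet_eq_ncard hIX.indep hIX.subset fun J hJ hJX => ?_
  obtain ⟨J', hJ', hJJ'⟩ := hJ.subset_isBasis_of_subset hJX hXE
  have h1 : J.ncard ≤ J'.ncard :=
    ncard_le_ncard hJJ' (hfin.subset hJ'.indep.subset_ground)
  have h2 : J'.ncard = I.ncard := hJ'.restrict_isBase.ncard_eq_ncard_of_isBase hIX.restrict_isBase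
  omega

lemma Indep.ncard_le_rkSet (hfin : M.E.Finite) (hK : M.Indep K) (hKY : K ⊆ Y)
    (hY : Y ⊆ M.E) : K.ncard ≤ M.rkSet Y := by
  obtain ⟨J, hJ, hKJ⟩ := hK.subset_isBasis_of_subset hKY hY
  rw [hJ.rkSet_eq hfin]
  exact ncard_le_ncard hKJ (hfin.subset hJ.indep.subset_ground)

lemma rkSet_mono (hfin : M.E.Finite) (hXY : X ⊆ Y) (hY : Y ⊆ M.E) :
    M.rkSet X ≤ M.rkSet Y := by
  obtain ⟨I, hI⟩ := M.exists_isBasis X (hXY.trans hY)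
  rw [hI.rkSet_eq hfin]
  exact hI.indep.ncard_le_rkSet hfin (hI.subset.trans hXY) hY

lemma rkSet_le_rank (hfin : M.E.Finite) (hX : X ⊆ M.E) : M.rkSet X ≤ M.rank :=
  rkSet_mono hfin hX Subset.rfl

lemma rkSet_closure_eq (hfin : M.E.Finite) (hX : X ⊆ M.E) :
    M.rkSet (M.closure X) = M.rkSet X := by
  obtain ⟨I, hI⟩ := M.exists_isBasis X hX
  rw [hI.rkSet_eq hfin, hI.isBasis_closure_right.rkSet_eq hfin]

lemma rkSet_restrict (hfin : M.E.Finite) (hAF : A ⊆ F) (hF : F ⊆ M.E) :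
    (M ↾ F).rkSet A = M.rkSet A := by
  obtain ⟨I, hI⟩ := M.exists_isBasis A (hAF.trans hF)
  have hI' : (M ↾ F).IsBasis I A := by
    rw [isBasis_restrict_iff hF]; exact ⟨hI, hAF⟩
  rw [hI.rkSet_eq hfin, hI'.rkSet_eq (by simpa using hfin.subset hF)]

lemma rank_restrict (hfin : M.E.Finite) (hF : F ⊆ M.E) : (M ↾ F).rank = M.rkSet F := by
  have : (M ↾ F).rank = (M ↾ F).rkSet F := rfl
  rw [this, rkSet_restrict hfin Subset.rfl hF]

lemma rkSet_dual_add (hfin : M.E.Finite) (hX : X ⊆ M.E) :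
    M✶.rkSet X + M.rank = X.ncard + M.rkSet (M.E \ X) := by
  obtain ⟨J, hJ⟩ := M.exists_isBasis (M.E \ X) diff_subset
  obtain ⟨B, hB, hJB⟩ := hJ.indep.exists_isBase_superset
  have hBE : B ⊆ M.E := hB.subset_ground
  have hXfin : X.Finite := hfin.subset hX
  have hBfin : B.Finite := hfin.subset hBE
  have hBdiff : B \ X = J := by
    refine (hJ.eq_of_subset_indep (hB.indep.subset diff_subset) ?_ ?_).symm
    · exact subset_diff.2 ⟨hJB, (subset_diff.1 hJ.subset).2⟩
    · exact diff_subset_diff_left hBE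
  have hdualI : M✶.Indep (X \ B) := by
    rw [dual_indep_iff_exists (diff_subset.trans hX)]
    exact ⟨B, hB, disjoint_sdiff_left⟩
  have hrd : M✶.rkSet X = (X \ B).ncard := by
    refine rkSet_eq_ncard hdualI diff_subset fun I' hI' hI'X => ?_
    obtain ⟨hI'E, B', hB', hdisj⟩ := dual_indep_iff_exists'.1 hI'
    have hB'E : B' ⊆ M.E := hB'.subset_ground
    have hB'fin : B'.Finite := hfin.subset hB'E
    have h1 : (B' \ X).ncard ≤ J.ncard := by
      rw [← hJ.rkSet_eq hfin]
      exact (hB'.indep.subset diff_subset).ncard_le_rkSet hfin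
        (diff_subset_diff_left hB'E) diff_subset
    have h2 : (B' ∩ X).ncard + (B' \ X).ncard = B'.ncard :=
      ncard_inter_add_ncard_diff_eq_ncard B' X hB'fin
    have h3 : (B ∩ X).ncard + (B \ X).ncard = B.ncard :=
      ncard_inter_add_ncard_diff_eq_ncard B X hBfin
    have h4 : (X ∩ B).ncard + (X \ B).ncard = X.ncard :=
      ncard_inter_add_ncard_diff_eq_ncard X B hXfin
    have h5 : B'.ncard = B.ncard := hB'.ncard_eq_ncard_of_isBase hB
    have h6 : (I' ∪ (B' ∩ X)).ncard ≤ X.ncard :=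
      ncard_le_ncard (union_subset hI'X inter_subset_right) hXfin
    have h7 : (I' ∪ (B' ∩ X)).ncard = I'.ncard + (B' ∩ X).ncard := by
      rw [ncard_union_eq (hdisj.mono_right inter_subset_left) (hXfin.subset hI'X)
        (hB'fin.subset inter_subset_left)]
    have h8 : (B ∩ X).ncard = (X ∩ B).ncard := by rw [inter_comm]
    have h9 : (B \ X).ncard = J.ncard := by rw [hBdiff]
    omega
  rw [hrd, hJ.rkSet_eq hfin]
  have hrank : M.rank = B.ncard := by
    have : M.rank = M.rkSet M.E := rfl
    rw [this, hB.isBasis_ground.rkSet_eq hfin]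
  rw [hrank]
  have h3 : (B ∩ X).ncard + (B \ X).ncard = B.ncard :=
    ncard_inter_add_ncard_diff_eq_ncard B X hBfin
  have h4 : (X ∩ B).ncard + (X \ B).ncard = X.ncard :=
    ncard_inter_add_ncard_diff_eq_ncard X B hXfin
  have h8 : (B ∩ X).ncard = (X ∩ B).ncard := by rw [inter_comm]
  have h9 : (B \ X).ncard = J.ncard := by rw [hBdiff]
  omega

lemma con_ground (M : Matroid α) (C : Set α) : (M.con C).E = M.E \ C := rfl

lemma con_rkSet_add (hfin : M.E.Finite) (hC : C ⊆ M.E) (hB : B ⊆ M.E \ C) :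
    (M.con C).rkSet B + M.rkSet C = M.rkSet (C ∪ B) := by
  set N := M✶ ↾ (M.E \ C) with hN
  have hcon : M.con C = N✶ := rfl
  have hNg : N.E = M.E \ C := rfl
  have hNfin : N.E.Finite := hfin.subset diff_subset
  have h1 := rkSet_dual_add (M := N) hNfin (X := B) hB
  have hdd : N.E \ B = M.E \ (C ∪ B) := by
    rw [hNg, diff_diff]
  have hNrank : N.rank = M✶.rkSet (M.E \ C) := by
    have : N.rank = N.rkSet (M.E \ C) := rfl
    rw [this, hN, rkSet_restrict (M := M✶) (A := M.E \ C) (F := M.E \ C) hfin Subset.rfl diff_subset]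
  have hNr2 : N.rkSet (M.E \ (C ∪ B)) = M✶.rkSet (M.E \ (C ∪ B)) := by
    rw [hN, rkSet_restrict (M := M✶) (A := M.E \ (C ∪ B)) (F := M.E \ C) hfin (diff_subset_diff_right subset_union_left) diff_subset]
  rw [hdd, hNr2, hNrank, ← hcon] at h1
  have h2 := rkSet_dual_add hfin (X := M.E \ C) diff_subset
  rw [diff_diff_cancel_left hC] at h2
  have hCB : C ∪ B ⊆ M.E := union_subset hC (hB.trans diff_subset)
  have h3 := rkSet_dual_add hfin (X := M.E \ (C ∪ B)) diff_subset
  rw [diff_diff_cancel_left hCB] at h3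
  have hcard : B.ncard + (M.E \ (C ∪ B)).ncard = (M.E \ C).ncard := by
    have h5 : ((M.E \ C) ∩ B).ncard + ((M.E \ C) \ B).ncard = (M.E \ C).ncard :=
      ncard_inter_add_ncard_diff_eq_ncard _ B (hfin.subset diff_subset)
    rw [inter_eq_self_of_subset_right hB, diff_diff] at h5
    exact h5
  omega

lemma con_rank_add (hfin : M.E.Finite) (hC : C ⊆ M.E) :
    (M.con C).rank + M.rkSet C = M.rank := by
  have h := con_rkSet_add (B := M.E \ C) hfin hC Subset.rfl
  rw [union_diff_cancel hC] at h
  exact h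


attribute [local instance] Classical.propDecidable

lemma finsum_cond_eq_sum (p : Set α → Prop) (Q : Finset (Set α)) (hQ : ∀ S, S ∈ Q ↔ p S)
    (f : Set α → ℚ) : (∑ᶠ (S : Set α) (_ : p S), f S) = ∑ S ∈ Q, f S := by
  have h : {S : Set α | p S} = ↑Q := by ext S; simp [hQ S]
  rw [show (∑ᶠ (S : Set α) (_ : p S), f S) = ∑ᶠ S ∈ {S : Set α | p S}, f S from rfl, h,
    finsum_mem_coe_finset]

lemma charPoly_eq_sum (N : Matroid α) (t : ℚ) (Q : Finset (Set α))
    (hQ : ∀ S, S ∈ Q ↔ S ⊆ N.E) :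
    N.charPoly t = ∑ S ∈ Q, (-1 : ℚ) ^ S.ncard * t ^ (N.rank - N.rkSet S) :=
  finsum_cond_eq_sum _ Q hQ _

/-- The finset of subsets of `X` that are also subsets of the ground set. -/
noncomputable def pws (M : Matroid α) (hfin : M.E.Finite) (X : Set α) : Finset (Set α) :=
  Set.Finite.toFinset (s := {S | S ⊆ X ∧ S ⊆ M.E}) (hfin.finite_subsets.subset fun _ hS => hS.2)

lemma mem_pws {M : Matroid α} {hfin : M.E.Finite} {X S : Set α} :
    S ∈ pws M hfin X ↔ S ⊆ X ∧ S ⊆ M.E := by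
  simp [pws, Set.Finite.mem_toFinset]

lemma mem_pws_of_subset {M : Matroid α} {hfin : M.E.Finite} {X S : Set α} (hX : X ⊆ M.E) :
    S ∈ pws M hfin X ↔ S ⊆ X := by
  rw [mem_pws]
  exact ⟨fun h => h.1, fun h => ⟨h, h.trans hX⟩⟩

/-- The finset of flats of `M`. -/
noncomputable def fls (M : Matroid α) (hfin : M.E.Finite) : Finset (Set α) :=
  Set.Finite.toFinset (s := {F | M.IsFlat F})
    (hfin.finite_subsets.subset fun _ hF => hF.subset_ground)

lemma mem_fls {M : Matroid α} {hfin : M.E.Finite} {F : Set α} :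
    F ∈ fls M hfin ↔ M.IsFlat F := by
  simp [fls, Set.Finite.mem_toFinset]

lemma sum_pws_neg_one (M : Matroid α) (hfin : M.E.Finite) {X : Set α} (hX : X ⊆ M.E) :
    (∑ S ∈ pws M hfin X, (-1 : ℚ) ^ S.ncard) = if X = ∅ then 1 else 0 := by
  have hXfin : X.Finite := hfin.subset hX
  have key : (∑ S ∈ pws M hfin X, (-1 : ℚ) ^ S.ncard)
      = ∑ m ∈ hXfin.toFinset.powerset, (-1 : ℚ) ^ m.card := by
    refine Finset.sum_bij' (i := fun S hS => (hXfin.subset ((mem_pws.1 hS).1)).toFinset)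
      (j := fun B _ => (B : Set α)) ?_ ?_ ?_ ?_ ?_
    · intro S hS
      rw [Finset.mem_powerset]
      intro x hx
      simp only [Set.Finite.mem_toFinset] at hx ⊢
      exact (mem_pws.1 hS).1 hx
    · intro B hB
      rw [Finset.mem_powerset] at hB
      rw [mem_pws_of_subset hX]
      intro x hx
      simpa using (hB (by simpa using hx) : x ∈ hXfin.toFinset)
    · intro S hS
      simp [Set.Finite.coe_toFinset]
    · intro B hB
      ext x
      simp [Set.Finite.mem_toFinset]
    · intro S hS
      rw [Set.ncard_eq_toFinset_card S (hXfin.subset ((mem_pws.1 hS).1))]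
  rw [key]
  have := Finset.sum_powerset_neg_one_pow_card (x := hXfin.toFinset)
  have h2 : (∑ m ∈ hXfin.toFinset.powerset, (-1 : ℚ) ^ m.card)
      = ((∑ m ∈ hXfin.toFinset.powerset, (-1 : ℤ) ^ m.card : ℤ) : ℚ) := by
    push_cast
    rfl
  rw [h2, this]
  by_cases hXe : X = ∅
  · simp [hXe, Set.Finite.toFinset_eq_empty.2 hXe]
  · rw [if_neg (by simpa [Set.Finite.toFinset_eq_empty] using hXe), if_neg hXe]
    simp


/-- `mf F H = ∑_{B ⊆ E \ F, cl(F ∪ B) = H} (-1)^|B|`, the "Möbius coefficient". -/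
noncomputable def mf (M : Matroid α) (hfin : M.E.Finite) (F H : Set α) : ℚ :=
  ∑ B ∈ (pws M hfin (M.E \ F)).filter (fun B => M.closure (F ∪ B) = H), (-1 : ℚ) ^ B.ncard

lemma sum_mf_between (M : Matroid α) (hfin : M.E.Finite) {F K : Set α}
    (hF : M.IsFlat F) (hK : M.IsFlat K) (hFK : F ⊆ K) :
    (∑ H ∈ (fls M hfin).filter (fun H => F ⊆ H ∧ H ⊆ K), mf M hfin F H)
      = if F = K then 1 else 0 := by
  have hFE := hF.subset_ground
  have hKE := hK.subset_ground
  have hmaps : ∀ B ∈ pws M hfin (K \ F),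
      M.closure (F ∪ B) ∈ (fls M hfin).filter (fun H => F ⊆ H ∧ H ⊆ K) := by
    intro B hB
    obtain ⟨hBK, hBE⟩ := mem_pws.1 hB
    have hFBE : F ∪ B ⊆ M.E := union_subset hFE hBE
    rw [Finset.mem_filter, mem_fls]
    refine ⟨M.flat_closure' _, (subset_union_left.trans (M.subset_closure _ hFBE)), ?_⟩
    have : F ∪ B ⊆ K := union_subset hFK (hBK.trans diff_subset)
    calc M.closure (F ∪ B) ⊆ M.closure K := M.closure_subset_closure this
    _ = K := hK.closure
  have hswap := Finset.sum_fiberwise_of_maps_to hmaps (fun B => (-1 : ℚ) ^ B.ncard)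
  have hfib : ∀ H ∈ (fls M hfin).filter (fun H => F ⊆ H ∧ H ⊆ K),
      mf M hfin F H
        = ∑ B ∈ (pws M hfin (K \ F)).filter (fun B => M.closure (F ∪ B) = H),
            (-1 : ℚ) ^ B.ncard := by
    intro H hH
    rw [Finset.mem_filter, mem_fls] at hH
    obtain ⟨hHfl, hFH, hHK⟩ := hH
    rw [mf]
    congr 1
    ext B
    simp only [Finset.mem_filter, mem_pws]
    constructor
    · rintro ⟨⟨hBEF, hBE⟩, hcl⟩
      refine ⟨⟨subset_diff.2 ⟨?_, (subset_diff.1 hBEF).2⟩, hBE⟩, hcl⟩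
      have : F ∪ B ⊆ M.closure (F ∪ B) := M.subset_closure _ (union_subset hFE hBE)
      rw [hcl] at this
      exact (subset_union_right.trans this).trans hHK
    · rintro ⟨⟨hBKF, hBE⟩, hcl⟩
      exact ⟨⟨subset_diff.2 ⟨hBE, (subset_diff.1 hBKF).2⟩, hBE⟩, hcl⟩
  rw [Finset.sum_congr rfl hfib, hswap, sum_pws_neg_one M hfin (diff_subset.trans hKE)]
  by_cases h : F = K
  · rw [if_pos h, if_pos (by rw [h]; exact diff_eq_empty.2 Subset.rfl)]
  · rw [if_neg h, if_neg]
    intro hcon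
    exact h (hFK.antisymm (diff_eq_empty.1 hcon))

lemma filter_between_self (M : Matroid α) (hfin : M.E.Finite) {G : Set α} (hG : M.IsFlat G) :
    (fls M hfin).filter (fun F => G ⊆ F ∧ F ⊆ G) = {G} := by
  ext F
  simp only [Finset.mem_filter, mem_fls, Finset.mem_singleton]
  constructor
  · rintro ⟨_, h1, h2⟩; exact h2.antisymm h1
  · rintro rfl; exact ⟨hG, Subset.rfl, Subset.rfl⟩

lemma mf_self (M : Matroid α) (hfin : M.E.Finite) {G : Set α} (hG : M.IsFlat G) :
    mf M hfin G G = 1 := by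
  have h := sum_mf_between M hfin hG hG Subset.rfl
  rwa [filter_between_self M hfin hG, Finset.sum_singleton, if_pos rfl] at h

lemma sum_mf_between' (M : Matroid α) (hfin : M.E.Finite) {G K : Set α}
    (hG : M.IsFlat G) (hK : M.IsFlat K) (hGK : G ⊆ K) :
    (∑ F ∈ (fls M hfin).filter (fun F => G ⊆ F ∧ F ⊆ K), mf M hfin F K)
      = if G = K then 1 else 0 := by
  have main : ∀ n : ℕ, ∀ K : Set α, M.IsFlat K → G ⊆ K → (K \ G).ncard = n →
      (∑ F ∈ (fls M hfin).filter (fun F => G ⊆ F ∧ F ⊆ K), mf M hfin F K)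
        = if G = K then 1 else 0 := by
    intro n
    induction n using Nat.strong_induction_on with
    | _ n IH =>
      intro K hK hGK hcard
      by_cases hGKeq : G = K
      · subst hGKeq
        rw [filter_between_self M hfin hG, Finset.sum_singleton, mf_self M hfin hG, if_pos rfl]
      · rw [if_neg hGKeq]
        have hKE := hK.subset_ground
        have hstep : ∀ F ∈ (fls M hfin).filter (fun F => G ⊆ F ∧ F ⊆ K),
            mf M hfin F K = (if F = K then (1 : ℚ) else 0)
              - ∑ H ∈ ((fls M hfin).filter (fun H => F ⊆ H ∧ H ⊆ K)).erase K,
                  mf M hfin F H := by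
          intro F hF
          rw [Finset.mem_filter, mem_fls] at hF
          obtain ⟨hFfl, hGF, hFK⟩ := hF
          have h46 := sum_mf_between M hfin hFfl hK hFK
          have hKmem : K ∈ (fls M hfin).filter (fun H => F ⊆ H ∧ H ⊆ K) := by
            rw [Finset.mem_filter, mem_fls]; exact ⟨hK, hFK, Subset.rfl⟩
          rw [← Finset.add_sum_erase _ _ hKmem] at h46
          linarith [h46]
        rw [Finset.sum_congr rfl hstep, Finset.sum_sub_distrib]
        have hA : (∑ F ∈ (fls M hfin).filter (fun F => G ⊆ F ∧ F ⊆ K),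
            (if F = K then (1 : ℚ) else 0)) = 1 := by
          rw [Finset.sum_ite_eq' _ K (fun _ => (1 : ℚ))]
          rw [if_pos (by rw [Finset.mem_filter, mem_fls]; exact ⟨hK, hGK, Subset.rfl⟩)]
        have hswap : (∑ F ∈ (fls M hfin).filter (fun F => G ⊆ F ∧ F ⊆ K),
              ∑ H ∈ ((fls M hfin).filter (fun H => F ⊆ H ∧ H ⊆ K)).erase K, mf M hfin F H)
            = ∑ H ∈ ((fls M hfin).filter (fun H => G ⊆ H ∧ H ⊆ K)).erase K,
              ∑ F ∈ (fls M hfin).filter (fun F => G ⊆ F ∧ F ⊆ H), mf M hfin F H := by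
          refine Finset.sum_comm' ?_
          intro F H
          simp only [Finset.mem_erase, Finset.mem_filter, mem_fls]
          constructor
          · rintro ⟨⟨hFfl, hGF, hFK⟩, hHK, hHfl, hFH, hHK'⟩
            exact ⟨⟨hFfl, hGF, hFH⟩, hHK, hHfl, hGF.trans hFH, hHK'⟩
          · rintro ⟨⟨hFfl, hGF, hFH⟩, hHK, hHfl, hGH, hHK'⟩
            exact ⟨⟨hFfl, hGF, hFH.trans hHK'⟩, hHK, hHfl, hFH, hHK'⟩
        rw [hswap]
        have hinner : ∀ H ∈ ((fls M hfin).filter (fun H => G ⊆ H ∧ H ⊆ K)).erase K,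
            (∑ F ∈ (fls M hfin).filter (fun F => G ⊆ F ∧ F ⊆ H), mf M hfin F H)
              = if G = H then (1 : ℚ) else 0 := by
          intro H hH
          rw [Finset.mem_erase, Finset.mem_filter, mem_fls] at hH
          obtain ⟨hHK, hHfl, hGH, hHK'⟩ := hH
          refine IH ((H \ G).ncard) ?_ H hHfl hGH rfl
          rw [← hcard]
          refine Set.ncard_lt_ncard ?_ (hfin.subset (diff_subset.trans hKE))
          refine ssubset_of_subset_of_ne (diff_subset_diff_left hHK') ?_
          intro heq
          apply hHK
          rw [← union_diff_cancel hGH, ← union_diff_cancel hGK, heq]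
        rw [Finset.sum_congr rfl hinner, Finset.sum_ite_eq _ G (fun _ => (1 : ℚ))]
        rw [if_pos, hA]
        · ring
        · rw [Finset.mem_erase, Finset.mem_filter, mem_fls]
          exact ⟨hGKeq, hG, Subset.rfl, hGK⟩
  exact main ((K \ G).ncard) K hK hGK rfl


lemma pow_helper {t : ℚ} (ht : t ≠ 0) {a b : ℕ} (hab : a ≤ b) :
    t ^ b * (1 / t) ^ (b - a) = t ^ a := by
  have h : t ^ b = t ^ a * t ^ (b - a) := by
    rw [← pow_add]
    congr 1
    omega
  rw [h, one_div, inv_pow, mul_assoc, mul_inv_cancel₀ (pow_ne_zero _ ht), mul_one]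

lemma conCharPoly_eq (M : Matroid α) (hfin : M.E.Finite) {F : Set α} (hF : M.IsFlat F) (t : ℚ) :
    (M.con F).charPoly t
      = ∑ H ∈ (fls M hfin).filter (fun H => F ⊆ H),
          mf M hfin F H * t ^ (M.rank - M.rkSet H) := by
  have hFE := hF.subset_ground
  rw [charPoly_eq_sum (M.con F) t (pws M hfin (M.E \ F))
    (fun S => by rw [con_ground]; exact mem_pws_of_subset diff_subset)]
  have hexp : ∀ B ∈ pws M hfin (M.E \ F),
      (-1 : ℚ) ^ B.ncard * t ^ ((M.con F).rank - (M.con F).rkSet B)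
        = (-1 : ℚ) ^ B.ncard * t ^ (M.rank - M.rkSet (F ∪ B)) := by
    intro B hB
    have hBEF : B ⊆ M.E \ F := (mem_pws_of_subset diff_subset).1 hB
    have e1 := con_rkSet_add hfin hFE hBEF
    have e2 := con_rank_add hfin hFE
    congr 2
    omega
  rw [Finset.sum_congr rfl hexp]
  have hmaps : ∀ B ∈ pws M hfin (M.E \ F),
      M.closure (F ∪ B) ∈ (fls M hfin).filter (fun H => F ⊆ H) := by
    intro B hB
    obtain ⟨hBEF, hBE⟩ := mem_pws.1 hB
    rw [Finset.mem_filter, mem_fls]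
    exact ⟨M.flat_closure' _,
      subset_union_left.trans (M.subset_closure _ (union_subset hFE hBE))⟩
  rw [← Finset.sum_fiberwise_of_maps_to hmaps
    (fun B => (-1 : ℚ) ^ B.ncard * t ^ (M.rank - M.rkSet (F ∪ B)))]
  refine Finset.sum_congr rfl fun H hH => ?_
  have hfib : ∀ B ∈ (pws M hfin (M.E \ F)).filter (fun B => M.closure (F ∪ B) = H),
      (-1 : ℚ) ^ B.ncard * t ^ (M.rank - M.rkSet (F ∪ B))
        = (-1 : ℚ) ^ B.ncard * t ^ (M.rank - M.rkSet H) := by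
    intro B hB
    rw [Finset.mem_filter, mem_pws] at hB
    obtain ⟨⟨hBEF, hBE⟩, hcl⟩ := hB
    rw [← hcl, rkSet_closure_eq hfin (union_subset hFE hBE)]
  rw [Finset.sum_congr rfl hfib, mf, ← Finset.sum_mul]

lemma restrCharPoly_eq (M : Matroid α) (hfin : M.E.Finite) {F : Set α} (hF : M.IsFlat F)
    {t : ℚ} (ht : t ≠ 0) :
    t ^ M.rkSet F * (M ↾ F).charPoly (1 / t)
      = ∑ G ∈ (fls M hfin).filter (fun G => G ⊆ F), mf M hfin ∅ G * t ^ M.rkSet G := by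
  have hFE := hF.subset_ground
  rw [charPoly_eq_sum (M ↾ F) (1 / t) (pws M hfin F)
    (fun S => by rw [restrict_ground_eq]; exact mem_pws_of_subset hFE)]
  rw [Finset.mul_sum]
  have hterm : ∀ A ∈ pws M hfin F,
      t ^ M.rkSet F * ((-1 : ℚ) ^ A.ncard * (1 / t) ^ ((M ↾ F).rank - (M ↾ F).rkSet A))
        = (-1 : ℚ) ^ A.ncard * t ^ M.rkSet A := by
    intro A hA
    have hAF : A ⊆ F := (mem_pws_of_subset hFE).1 hA
    rw [rank_restrict hfin hFE, rkSet_restrict hfin hAF hFE]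
    rw [mul_comm (t ^ M.rkSet F), mul_assoc,
      mul_comm ((1 / t) ^ (M.rkSet F - M.rkSet A)) (t ^ M.rkSet F),
      pow_helper ht (rkSet_mono hfin hAF hFE)]
  rw [Finset.sum_congr rfl hterm]
  have hmaps : ∀ A ∈ pws M hfin F,
      M.closure A ∈ (fls M hfin).filter (fun G => G ⊆ F) := by
    intro A hA
    have hAF : A ⊆ F := (mem_pws_of_subset hFE).1 hA
    rw [Finset.mem_filter, mem_fls]
    refine ⟨M.flat_closure' _, ?_⟩
    calc M.closure A ⊆ M.closure F := M.closure_subset_closure hAF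
    _ = F := hF.closure
  rw [← Finset.sum_fiberwise_of_maps_to hmaps
    (fun A => (-1 : ℚ) ^ A.ncard * t ^ M.rkSet A)]
  refine Finset.sum_congr rfl fun G hG => ?_
  rw [Finset.mem_filter, mem_fls] at hG
  obtain ⟨hGfl, hGF⟩ := hG
  have hfib : ∀ A ∈ (pws M hfin F).filter (fun A => M.closure A = G),
      (-1 : ℚ) ^ A.ncard * t ^ M.rkSet A = (-1 : ℚ) ^ A.ncard * t ^ M.rkSet G := by
    intro A hA
    rw [Finset.mem_filter, mem_pws] at hA
    obtain ⟨⟨hAF, hAE⟩, hcl⟩ := hA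
    rw [← hcl, rkSet_closure_eq hfin hAE]
  rw [Finset.sum_congr rfl hfib, mf, ← Finset.sum_mul]
  congr 1
  congr 1
  ext A
  simp only [Finset.mem_filter, mem_pws, diff_empty, empty_union]
  constructor
  · rintro ⟨⟨hAF, hAE⟩, hcl⟩
    exact ⟨⟨hAE, hAE⟩, hcl⟩
  · rintro ⟨⟨hAE, _⟩, hcl⟩
    refine ⟨⟨?_, hAE⟩, hcl⟩
    have : A ⊆ M.closure A := M.subset_closure _ hAE
    rw [hcl] at this
    exact this.trans hGF

lemma sum_con_charPoly (M : Matroid α) (hfin : M.E.Finite) {G : Set α} (hG : M.IsFlat G)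
    (t : ℚ) :
    (∑ F ∈ (fls M hfin).filter (fun F => G ⊆ F), (M.con F).charPoly t)
      = t ^ (M.rank - M.rkSet G) := by
  have h1 : ∀ F ∈ (fls M hfin).filter (fun F => G ⊆ F),
      (M.con F).charPoly t
        = ∑ H ∈ (fls M hfin).filter (fun H => F ⊆ H),
            mf M hfin F H * t ^ (M.rank - M.rkSet H) := by
    intro F hF
    rw [Finset.mem_filter, mem_fls] at hF
    exact conCharPoly_eq M hfin hF.1 t
  rw [Finset.sum_congr rfl h1]
  have hswap : (∑ F ∈ (fls M hfin).filter (fun F => G ⊆ F),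
        ∑ H ∈ (fls M hfin).filter (fun H => F ⊆ H),
          mf M hfin F H * t ^ (M.rank - M.rkSet H))
      = ∑ H ∈ (fls M hfin).filter (fun H => G ⊆ H),
          ∑ F ∈ (fls M hfin).filter (fun F => G ⊆ F ∧ F ⊆ H),
            mf M hfin F H * t ^ (M.rank - M.rkSet H) := by
    refine Finset.sum_comm' ?_
    intro F H
    simp only [Finset.mem_filter, mem_fls]
    constructor
    · rintro ⟨⟨hFfl, hGF⟩, hHfl, hFH⟩
      exact ⟨⟨hFfl, hGF, hFH⟩, hHfl, hGF.trans hFH⟩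
    · rintro ⟨⟨hFfl, hGF, hFH⟩, hHfl, hGH⟩
      exact ⟨⟨hFfl, hGF⟩, hHfl, hFH⟩
  rw [hswap]
  have h2 : ∀ H ∈ (fls M hfin).filter (fun H => G ⊆ H),
      (∑ F ∈ (fls M hfin).filter (fun F => G ⊆ F ∧ F ⊆ H),
          mf M hfin F H * t ^ (M.rank - M.rkSet H))
        = if G = H then t ^ (M.rank - M.rkSet H) else 0 := by
    intro H hH
    rw [Finset.mem_filter, mem_fls] at hH
    obtain ⟨hHfl, hGH⟩ := hH
    rw [← Finset.sum_mul, sum_mf_between' M hfin hG hHfl hGH]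
    by_cases h : G = H
    · rw [if_pos h, if_pos h, one_mul]
    · rw [if_neg h, if_neg h, zero_mul]
  rw [Finset.sum_congr rfl h2, Finset.sum_ite_eq _ G (fun H => t ^ (M.rank - M.rkSet H))]
  rw [if_pos (by rw [Finset.mem_filter, mem_fls]; exact ⟨hG, Subset.rfl⟩)]

end Matroid

open Matroid Set

/-- For any nonempty loopless matroid `M`,
`∑_{F ∈ L(M)} t^(rk F) χ_{M^F}(1/t) χ_{M_F}(t) = 0` as rational functions of `t`. -/
theorem charPoly_convolution_eq_zero (M : Matroid α) (hfin : M.E.Finite)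
    (hl : M.IsLoopless) (hne : M.E.Nonempty) :
    ∀ t : ℚ, t ≠ 0 →
      ∑ᶠ (F : Set α) (_ : M.IsFlat F),
        t ^ M.rkSet F * (M ↾ F).charPoly (1 / t) * (M.con F).charPoly t = 0 := by
  classical
  intro t ht
  rw [Matroid.finsum_cond_eq_sum (fun F => M.IsFlat F) (fls M hfin) (fun _ => mem_fls)
    (fun F => t ^ M.rkSet F * (M ↾ F).charPoly (1 / t) * (M.con F).charPoly t)]
  have step1 : ∀ F ∈ fls M hfin,
      t ^ M.rkSet F * (M ↾ F).charPoly (1 / t) * (M.con F).charPoly t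
        = ∑ G ∈ (fls M hfin).filter (fun G => G ⊆ F),
            mf M hfin ∅ G * t ^ M.rkSet G * (M.con F).charPoly t := by
    intro F hF
    rw [restrCharPoly_eq M hfin (mem_fls.1 hF) ht, Finset.sum_mul]
  rw [Finset.sum_congr rfl step1]
  have hswap : (∑ F ∈ fls M hfin, ∑ G ∈ (fls M hfin).filter (fun G => G ⊆ F),
        mf M hfin ∅ G * t ^ M.rkSet G * (M.con F).charPoly t)
      = ∑ G ∈ fls M hfin, ∑ F ∈ (fls M hfin).filter (fun F => G ⊆ F),
        mf M hfin ∅ G * t ^ M.rkSet G * (M.con F).charPoly t := by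
    refine Finset.sum_comm' ?_
    intro F G
    simp only [Finset.mem_filter, mem_fls]
    tauto
  rw [hswap]
  have step2 : ∀ G ∈ fls M hfin,
      (∑ F ∈ (fls M hfin).filter (fun F => G ⊆ F),
        mf M hfin ∅ G * t ^ M.rkSet G * (M.con F).charPoly t)
        = mf M hfin ∅ G * t ^ M.rank := by
    intro G hG
    have hGfl := mem_fls.1 hG
    rw [← Finset.mul_sum, sum_con_charPoly M hfin hGfl t, mul_assoc, ← pow_add]
    have hle := rkSet_le_rank hfin hGfl.subset_ground
    congr 2
    omega
  rw [Finset.sum_congr rfl step2, ← Finset.sum_mul]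
  have hzero : (∑ G ∈ fls M hfin, mf M hfin ∅ G) = 0 := by
    have h := sum_mf_between M hfin hl.flat_empty M.ground_isFlat (empty_subset _)
    rw [Finset.filter_true_of_mem
      (fun H hH => ⟨empty_subset H, (mem_fls.1 hH).subset_ground⟩)] at h
    rw [if_neg (fun hcon => hne.ne_empty hcon.symm)] at h
    exact h
  rw [hzero, zero_mul]
end
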